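/- If after a full round of Bellman-Ford relaxation (processing every arc once) no potential value changes, i.e., d(u) + l(u,v) ≥ d(v) for all arcs (u,v) with d(u) finite, and d(s) = 0 with all finite values achievable by walks from s, then d(v) is exactly the shortest-walk distance from s to v for all v reachable from s, and G contains no negative cycle reachable from s. -/

import Mathlib

def IsWalk {V : Type*} (A : V → V → Prop) (s t : V) (w : ℕ → V) (k : ℕ) : Prop :=
  w 0 = s ∧ w k = t ∧ ∀ i < k, A (w i) (w (i+1))

noncomputable def walkLen {V : Type*} (l : V → V → ℝ) (w : ℕ → V) (k : ℕ) : ℝ :=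
  ∑ i ∈ Finset.range k, l (w i) (w (i+1))

lemma key_walk_bound {V : Type*} (A : V → V → Prop) (l : V → V → ℝ) (s : V) (d : V → EReal)
    (hds : d s = 0)
    (hstable : ∀ u v : V, A u v → d u ≠ ⊤ → d v ≤ d u + (l u v : EReal)) :
    ∀ (k : ℕ) (w : ℕ → V), w 0 = s → (∀ i < k, A (w i) (w (i+1))) →
      d (w k) ≤ (walkLen l w k : EReal) := by
  intro k
  induction k with
  | zero => intro w h0 _; simp [walkLen, h0, hds]
  | succ k ih =>
    intro w h0 hA
    have h1 : d (w k) ≤ (walkLen l w k : EReal) := ih w h0 (fun i hi => hA i (by omega))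
    have hne : d (w k) ≠ ⊤ := by
      intro h; rw [h, top_le_iff] at h1; exact EReal.coe_ne_top _ h1
    calc d (w (k+1)) ≤ d (w k) + (l (w k) (w (k+1)) : EReal) :=
          hstable _ _ (hA k (by omega)) hne
      _ ≤ (walkLen l w k : EReal) + (l (w k) (w (k+1)) : EReal) := add_le_add_left h1 _
      _ = (walkLen l w (k+1) : EReal) := by
          rw [walkLen, walkLen, Finset.sum_range_succ]; push_cast; ring

theorem stable_potentials_are_distances_and_no_negative_cycle {V : Type*} [Fintype V]
    (A : V → V → Prop) (l : V → V → ℝ) (s : V) (d : V → EReal)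
    (hds : d s = 0)
    (hach : ∀ v : V, d v ≠ ⊤ →
      ∃ (w : ℕ → V) (k : ℕ), IsWalk A s v w k ∧ d v = (walkLen l w k : EReal))
    (hstable : ∀ u v : V, A u v → d u ≠ ⊤ → d v ≤ d u + (l u v : EReal)) :
    (∀ v : V, (∃ (w : ℕ → V) (k : ℕ), IsWalk A s v w k) →
      ∃ L : ℝ, IsLeast
        {x : ℝ | ∃ (w : ℕ → V) (k : ℕ), IsWalk A s v w k ∧ x = walkLen l w k} L ∧
        d v = (L : EReal)) ∧
    ¬ ∃ (c : ℕ → V) (k : ℕ), 1 ≤ k ∧ c k = c 0 ∧ (∀ i < k, A (c i) (c (i+1))) ∧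
      (∑ i ∈ Finset.range k, l (c i) (c (i+1))) < 0 ∧
      ∃ (w : ℕ → V) (m : ℕ), IsWalk A s (c 0) w m := by
  have key := key_walk_bound A l s d hds hstable
  have hbound : ∀ (v : V) (w : ℕ → V) (k : ℕ), IsWalk A s v w k →
      d v ≤ (walkLen l w k : EReal) := by
    rintro v w k ⟨h0, hk, hA⟩
    have := key k w h0 hA
    rwa [hk] at this
  have hnetop : ∀ (v : V) (w : ℕ → V) (k : ℕ), IsWalk A s v w k → d v ≠ ⊤ := by
    intro v w k hw h
    have := hbound v w k hw
    rw [h, top_le_iff] at this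
    exact EReal.coe_ne_top _ this
  constructor
  · rintro v ⟨w, k, hw⟩
    obtain ⟨w', k', hw', hdv⟩ := hach v (hnetop v w k hw)
    refine ⟨walkLen l w' k', ⟨⟨w', k', hw', rfl⟩, ?_⟩, hdv⟩
    rintro x ⟨w'', k'', hw'', rfl⟩
    have h1 := hbound v w'' k'' hw''
    rw [hdv] at h1
    exact_mod_cast h1
  · rintro ⟨c, k, hk, hcyc, hAc, hneg, w, m, hw⟩
    obtain ⟨w', k', hw', hdv⟩ := hach (c 0) (hnetop (c 0) w m hw)
    set r := walkLen l w' k' with hr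
    have hchain : ∀ i ≤ k, d (c i) ≤ ((r + ∑ j ∈ Finset.range i, l (c j) (c (j+1))) : ℝ) := by
      intro i
      induction i with
      | zero => intro _; simp [hdv]
      | succ i ih =>
        intro hik
        have h1 := ih (by omega)
        have hne : d (c i) ≠ ⊤ := by
          intro h; rw [h, top_le_iff] at h1; exact EReal.coe_ne_top _ h1
        calc d (c (i+1)) ≤ d (c i) + (l (c i) (c (i+1)) : EReal) :=
              hstable _ _ (hAc i (by omega)) hne
          _ ≤ ((r + ∑ j ∈ Finset.range i, l (c j) (c (j+1))) : ℝ) + (l (c i) (c (i+1)) : EReal) :=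
              add_le_add_left h1 _
          _ = ((r + ∑ j ∈ Finset.range (i+1), l (c j) (c (j+1))) : ℝ) := by
              rw [Finset.sum_range_succ]; push_cast; rw [add_assoc]
    have hfin := hchain k le_rfl
    rw [hcyc, hdv] at hfin
    have : r ≤ r + ∑ j ∈ Finset.range k, l (c j) (c (j+1)) := by exact_mod_cast hfin
    linarith
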